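/- Let Ḡ ∈ ℝ be constant government expenditure and let s₁, s₂ ∈ ℝ satisfy s₁² = a(1+b)s₁ − ab and s₂² = a(1+b)s₂ − ab. Then for any constants c₁, c₂ ∈ ℝ, the sequences T_k = c₁·s₁^{k+1} + c₂·s₂^{k+1} + Ḡ/(1−a), C_k = a(c₁·s₁^k + c₂·s₂^k) + a·Ḡ/(1−a), I_k = c₁·s₁^k·(s₁ − a) + c₂·s₂^k·(s₂ − a) satisfy F·Y_{k+1} = G·Y_k + (Ḡ, 0, 0)ᵀ for all k ∈ ℕ, where Y_k = (T_k, C_k, I_k)ᵀ. -/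

import Mathlib

theorem samuelson_general_solution_satisfies_system
    (a b : ℝ) (ha : 0 < a) (ha1 : a < 1) (hb : 0 < b)
    (F G : Matrix (Fin 3) (Fin 3) ℝ)
    (hF : F = !![0, 0, 0; 0, 1, 0; 0, -b, 1])
    (hG : G = !![-1, 1, 1; a, 0, 0; 0, -b, 0])
    (Gbar : ℝ) (s₁ s₂ : ℝ)
    (hs₁ : s₁ ^ 2 = a * (1 + b) * s₁ - a * b)
    (hs₂ : s₂ ^ 2 = a * (1 + b) * s₂ - a * b)
    (c₁ c₂ : ℝ)
    (T C I : ℕ → ℝ)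
    (hT : ∀ k, T k = c₁ * s₁ ^ (k + 1) + c₂ * s₂ ^ (k + 1) + Gbar / (1 - a))
    (hC : ∀ k, C k = a * (c₁ * s₁ ^ k + c₂ * s₂ ^ k) + a * Gbar / (1 - a))
    (hI : ∀ k, I k = c₁ * s₁ ^ k * (s₁ - a) + c₂ * s₂ ^ k * (s₂ - a))
    (Y : ℕ → Fin 3 → ℝ) (hY : ∀ k, Y k = ![T k, C k, I k]) :
    ∀ k : ℕ, F.mulVec (Y (k + 1)) = G.mulVec (Y k) + ![Gbar, 0, 0] := by
  intro k
  have h1 : (1 : ℝ) - a ≠ 0 := by linarith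
  funext i
  fin_cases i <;>
    simp [hF, hG, hY, hT, hC, hI, Matrix.mulVec, dotProduct,
      Fin.sum_univ_succ, pow_succ] <;>
    field_simp
  · ring
  · linear_combination ((1 - a) * c₁ * s₁ ^ k) * hs₁ + ((1 - a) * c₂ * s₂ ^ k) * hs₂
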